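/- Under the hypotheses of the splitting theorem for S̃ = Σ_i (λ_i a_i b_i + Σ_j σ_{i,j} a_i u_{i,j} + b_i v_i) + W with no related arrows, the potential obtained by 'integration over massive arrows' — substituting b_i = −(1/λ_i) Σ_j σ_{i,j} u_{i,j} and a_i = −(1/λ_i) v_i using the relations ∂S̃/∂a_i = 0 and ∂S̃/∂b_i = 0 — equals the reduced part of φ(S̃), namely Σ_i (−1/λ_i) Σ_j σ_{i,j} u_{i,j} v_i + W. -/

import Mathlib

/-- A quiver given by a vertex set, an arrow set and source/target maps. -/
structure Quiv where
  V : Type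
  E : Type
  s : E → V
  t : E → V

namespace Quiv

/-- A path `a₁ a₂ ⋯ aₙ`, written with the composition-of-functions convention,
is a list of arrows such that the source of each arrow is the target of the next one. -/
def IsPath (q : Quiv) : List q.E → Prop
  | [] => True
  | [_] => True
  | a :: b :: l => q.s a = q.t b ∧ IsPath q (b :: l)

variable (q : Quiv)

/-- The source of a (nonempty) path. -/
def pSrc (l : List q.E) : Option q.V := l.getLast?.map q.s

/-- The target of a (nonempty) path. -/
def pTgt (l : List q.E) : Option q.V := l.head?.map q.t

/-- A cycle is a nonempty path whose source equals its target. -/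
def IsCycle (l : List q.E) : Prop := l ≠ [] ∧ q.IsPath l ∧ q.pSrc l = q.pTgt l

variable (K : Type) [Field K]

open Classical in
/-- The cyclic derivative of a single cycle `a₁ ⋯ aₙ` with respect to an arrow `x`:
`∑ₖ δ(x, aₖ) • a_{k+1} ⋯ aₙ a₁ ⋯ a_{k-1}`, as an element of the vector space
spanned by paths. -/
noncomputable def cycDerList (x : q.E) (l : List q.E) : List q.E →₀ K :=
  ∑ k ∈ Finset.range l.length,
    if l[k]? = some x then Finsupp.single (l.drop (k + 1) ++ l.take k) 1 else 0

/-- The cyclic derivative of a potential (a linear combination of cycles)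
with respect to an arrow `x`, extended linearly. -/
noncomputable def cycDer (x : q.E) (S : List q.E →₀ K) : List q.E →₀ K :=
  S.sum fun l c => c • q.cycDerList K x l

/-- Two potentials are cyclically equivalent if their difference lies in the span of
the elements `a₁ ⋯ a_{n-1} aₙ - a₂ ⋯ aₙ a₁` for cycles `a₁ ⋯ aₙ`. -/
def CycEquiv (S S' : List q.E →₀ K) : Prop :=
  S - S' ∈ Submodule.span K
    {x : List q.E →₀ K | ∃ l : List q.E, q.IsCycle l ∧
      x = Finsupp.single l 1 - Finsupp.single (l.rotate 1) 1}

end Quiv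

namespace Quiv

variable (q : Quiv) (K : Type) [Field K]

/-- Substitution of linear combinations of paths for arrows, extended multiplicatively
to a single path (concatenation of lists corresponds to composition of paths). -/
noncomputable def substList (f : q.E → (List q.E →₀ K)) : List q.E → (List q.E →₀ K)
  | [] => Finsupp.single [] 1
  | e :: l =>
      (f e).sum fun le ce =>
        (substList f l).sum fun lr cr => Finsupp.single (le ++ lr) (ce * cr)

/-- The algebra endomorphism of the path algebra determined by a substitution rule
`f` on arrows (fixing the vertex idempotents), applied to a potential. -/
noncomputable def subst (f : q.E → (List q.E →₀ K)) (S : List q.E →₀ K) :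
    List q.E →₀ K :=
  S.sum fun l c => c • q.substList K f l

end Quiv


namespace QuivAux

open Quiv

variable {q : Quiv} {K : Type} [Field K]

/-- The monoid algebra on the free monoid, definitionally `List q.E →₀ K`. -/
abbrev MA (q : Quiv) (K : Type) [Field K] := MonoidAlgebra K (FreeMonoid q.E)

/-- The identity, as a linear map into the monoid algebra. -/
noncomputable def Φ (q : Quiv) (K : Type) [Field K] : (List q.E →₀ K) →ₗ[K] MA q K :=
  ⟨⟨MonoidAlgebra.ofCoeff, fun _ _ => rfl⟩, fun _ _ => rfl⟩

lemma ofList_mul (l₁ l₂ : List q.E) :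
    FreeMonoid.ofList l₁ * FreeMonoid.ofList l₂ = FreeMonoid.ofList (l₁ ++ l₂) := rfl

lemma phi_single (l : List q.E) (c : K) :
    Φ q K (Finsupp.single l c) = MonoidAlgebra.single (FreeMonoid.ofList l) c := rfl

lemma phi_substList_nil (g : q.E → (List q.E →₀ K)) :
    Φ q K (q.substList K g []) = 1 := rfl

lemma phi_substList_cons (g : q.E → (List q.E →₀ K)) (e : q.E) (l : List q.E) :
    Φ q K (q.substList K g (e :: l)) = Φ q K (g e) * Φ q K (q.substList K g l) := by
  rw [MonoidAlgebra.mul_def]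
  show MonoidAlgebra.ofCoeff ((g e).sum fun le ce =>
    (q.substList K g l).sum fun lr cr => Finsupp.single (le ++ lr) (ce * cr)) = _
  simp only [MonoidAlgebra.ofCoeff_finsuppSum]
  rfl

lemma subst_apply (g : q.E → (List q.E →₀ K)) (S : List q.E →₀ K) :
    q.subst K g S = Finsupp.linearCombination K (q.substList K g) S := by
  rw [Finsupp.linearCombination_apply]; rfl

lemma phi_substList_avoid (g : q.E → (List q.E →₀ K)) (l : List q.E)
    (hl : ∀ x ∈ l, g x = Finsupp.single [x] 1) :
    Φ q K (q.substList K g l) = MonoidAlgebra.single (FreeMonoid.ofList l) 1 := by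
  induction l with
  | nil => rw [phi_substList_nil]; rfl
  | cons e t ih =>
    rw [phi_substList_cons, hl e List.mem_cons_self,
      ih (fun x hx => hl x (List.mem_cons_of_mem _ hx)), phi_single,
      MonoidAlgebra.single_mul_single, one_mul]
    rfl

lemma substList_avoid (g : q.E → (List q.E →₀ K)) (l : List q.E)
    (hl : ∀ x ∈ l, g x = Finsupp.single [x] 1) :
    q.substList K g l = Finsupp.single l 1 :=
  MonoidAlgebra.ofCoeff_injective (phi_substList_avoid g l hl)

lemma lc_fix (g : q.E → (List q.E →₀ K)) (W : List q.E →₀ K)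
    (hWg : ∀ l ∈ W.support, ∀ x ∈ l, g x = Finsupp.single [x] 1) :
    Finsupp.linearCombination K (q.substList K g) W = W := by
  rw [Finsupp.linearCombination_apply]
  rw [Finsupp.sum_congr (g2 := fun l c => Finsupp.single l c)]
  · exact Finsupp.sum_single W
  · intro l hl
    rw [substList_avoid g l (hWg l hl), Finsupp.smul_single, smul_eq_mul, mul_one]

section RingCalc

variable {R : Type} [Ring R] [Algebra K R]

lemma ring_calc_g {n : ℕ} {lam : K} (hlam : lam ≠ 0) (sig : Fin n → K)
    (U : Fin n → R) (V : R) :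
    lam • ((-lam⁻¹ • V) * ((-lam⁻¹ • ∑ j, sig j • U j) * 1))
      + ∑ j, sig j • ((-lam⁻¹ • V) * U j)
      + (-lam⁻¹ • ∑ j, sig j • U j) * V
    = -lam⁻¹ • ∑ j, sig j • (U j * V) := by
  simp only [mul_one, smul_mul_assoc, mul_smul_comm, smul_smul, Finset.mul_sum,
    Finset.sum_mul, Finset.smul_sum, neg_mul, mul_neg, neg_neg, neg_smul, ← sub_eq_add_neg]
  rw [add_eq_right, ← Finset.sum_add_distrib]
  apply Finset.sum_eq_zero
  intro x _
  simp only [smul_neg, neg_neg, smul_smul]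
  have hc : lam * (lam⁻¹ * sig x * lam⁻¹) = sig x * lam⁻¹ := by field_simp
  rw [hc, add_neg_cancel]

lemma ring_calc_f {n : ℕ} {lam : K} (hlam : lam ≠ 0) (sig : Fin n → K)
    (U : Fin n → R) (A B V AB : R) (hAB : AB = A * B) :
    lam • ((A - lam⁻¹ • V) * ((B - lam⁻¹ • ∑ j, sig j • U j) * 1))
      + ∑ j, sig j • ((A - lam⁻¹ • V) * U j)
      + (B - lam⁻¹ • ∑ j, sig j • U j) * V
    = lam • AB + -lam⁻¹ • ∑ j, sig j • (U j * V) + (B * V - V * B) := by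
  subst hAB
  have hinv : lam * lam⁻¹ = 1 := by field_simp
  simp only [mul_one, sub_mul, mul_sub, smul_mul_assoc, mul_smul_comm, smul_smul,
    Finset.mul_sum, Finset.sum_mul, Finset.smul_sum, smul_sub, smul_add, neg_smul]
  have e1 : ∀ x : Fin n, lam * (lam⁻¹ * sig x) = sig x := fun x => by field_simp
  have e2 : ∀ x : Fin n, lam * (lam⁻¹ * sig x * lam⁻¹) = sig x * lam⁻¹ := by
    intro x; field_simp
  simp only [e1, e2, hinv, one_smul, neg_mul, neg_smul, Finset.sum_neg_distrib]
  abel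

end RingCalc

end QuivAux

open Quiv in
/-- **integration over massive arrows.**
Under the hypotheses of the splitting theorem for
`S̃ = Σᵢ (λᵢ aᵢbᵢ + Σⱼ σᵢⱼ aᵢuᵢⱼ + bᵢvᵢ) + W` with no related arrows, the potential obtained
by integration over massive arrows — substituting `bᵢ = −λᵢ⁻¹ Σⱼ σᵢⱼ uᵢⱼ` and
`aᵢ = −λᵢ⁻¹ vᵢ` using the relations `∂S̃/∂aᵢ = 0` and `∂S̃/∂bᵢ = 0` — equals (up to cyclic
equivalence) the reduced part of `φ(S̃)`, namely `Σᵢ (−λᵢ⁻¹) Σⱼ σᵢⱼ uᵢⱼvᵢ + W`. -/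
theorem integration_over_massive_arrows_eq_reduced_part
    (q : Quiv) (K : Type) [Field K]
    (N : ℕ) (m : Fin N → ℕ)
    (a b : Fin N → q.E) (lam : Fin N → K)
    (sig : (i : Fin N) → Fin (m i) → K)
    (u : (i : Fin N) → Fin (m i) → List q.E) (v : Fin N → List q.E)
    (W : List q.E →₀ K)
    (hlam : ∀ i, lam i ≠ 0)
    (hainj : Function.Injective a) (hbinj : Function.Injective b)
    (hab : ∀ i j, a i ≠ b j)
    (h2cyc : ∀ i, q.IsCycle [a i, b i])
    (hu : ∀ i j, 2 ≤ (u i j).length ∧ q.IsCycle (a i :: u i j) ∧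
      ∀ x ∈ u i j, ∀ r, x ≠ a r ∧ x ≠ b r)
    (hv : ∀ i, 2 ≤ (v i).length ∧ q.IsCycle (b i :: v i) ∧
      ∀ x ∈ v i, ∀ r, x ≠ a r ∧ x ≠ b r)
    (hW : ∀ l ∈ W.support, q.IsCycle l ∧ ∀ x ∈ l, ∀ r, x ≠ a r ∧ x ≠ b r)
    -- the substitution rule giving integration over the massive arrows aᵢ, bᵢ
    (g : q.E → (List q.E →₀ K))
    (hga : ∀ i, g (a i) = -(lam i)⁻¹ • Finsupp.single (v i) 1)
    (hgb : ∀ i, g (b i) = -(lam i)⁻¹ • ∑ j, sig i j • Finsupp.single (u i j) 1)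
    (hgother : ∀ x : q.E, (∀ r, x ≠ a r ∧ x ≠ b r) → g x = Finsupp.single [x] 1)
    -- the substitution rule defining the right equivalence φ
    (f : q.E → (List q.E →₀ K))
    (hfa : ∀ i, f (a i) = Finsupp.single [a i] 1 - (lam i)⁻¹ • Finsupp.single (v i) 1)
    (hfb : ∀ i, f (b i) = Finsupp.single [b i] 1 -
      (lam i)⁻¹ • ∑ j, sig i j • Finsupp.single (u i j) 1)
    (hfother : ∀ x : q.E, (∀ r, x ≠ a r ∧ x ≠ b r) → f x = Finsupp.single [x] 1) :
    q.CycEquiv K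
      (q.subst K g
        (∑ i, (lam i • Finsupp.single [a i, b i] 1
          + ∑ j, sig i j • Finsupp.single (a i :: u i j) 1
          + Finsupp.single (b i :: v i) 1) + W))
      ((∑ i, (-(lam i)⁻¹) • ∑ j, sig i j • Finsupp.single (u i j ++ v i) (1 : K)) + W) ∧
    -- and this is the reduced part of φ(S̃):
    q.CycEquiv K
      (q.subst K f
        (∑ i, (lam i • Finsupp.single [a i, b i] 1
          + ∑ j, sig i j • Finsupp.single (a i :: u i j) 1
          + Finsupp.single (b i :: v i) 1) + W)
        - ∑ i, lam i • Finsupp.single [a i, b i] 1)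
      ((∑ i, (-(lam i)⁻¹) • ∑ j, sig i j • Finsupp.single (u i j ++ v i) (1 : K)) + W) := by
  have hgu : ∀ i j, ∀ x ∈ u i j, g x = Finsupp.single [x] 1 :=
    fun i j x hx => hgother x ((hu i j).2.2 x hx)
  have hgv : ∀ i, ∀ x ∈ v i, g x = Finsupp.single [x] 1 :=
    fun i x hx => hgother x ((hv i).2.2 x hx)
  have hfu : ∀ i j, ∀ x ∈ u i j, f x = Finsupp.single [x] 1 :=
    fun i j x hx => hfother x ((hu i j).2.2 x hx)
  have hfv : ∀ i, ∀ x ∈ v i, f x = Finsupp.single [x] 1 :=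
    fun i x hx => hfother x ((hv i).2.2 x hx)
  have hWg : Finsupp.linearCombination K (q.substList K g) W = W :=
    QuivAux.lc_fix g W (fun l hl x hx => hgother x ((hW l hl).2 x hx))
  have hWf : Finsupp.linearCombination K (q.substList K f) W = W :=
    QuivAux.lc_fix f W (fun l hl x hx => hfother x ((hW l hl).2 x hx))
  have hau : ∀ i j, QuivAux.Φ q K (q.substList K g (u i j))
      = MonoidAlgebra.single (FreeMonoid.ofList (u i j)) 1 :=
    fun i j => QuivAux.phi_substList_avoid g _ (hgu i j)
  have hav : ∀ i, QuivAux.Φ q K (q.substList K g (v i))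
      = MonoidAlgebra.single (FreeMonoid.ofList (v i)) 1 :=
    fun i => QuivAux.phi_substList_avoid g _ (hgv i)
  have hau' : ∀ i j, QuivAux.Φ q K (q.substList K f (u i j))
      = MonoidAlgebra.single (FreeMonoid.ofList (u i j)) 1 :=
    fun i j => QuivAux.phi_substList_avoid f _ (hfu i j)
  have hav' : ∀ i, QuivAux.Φ q K (q.substList K f (v i))
      = MonoidAlgebra.single (FreeMonoid.ofList (v i)) 1 :=
    fun i => QuivAux.phi_substList_avoid f _ (hfv i)
  have keyg : ∀ i, Finsupp.linearCombination K (q.substList K g)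
      (lam i • Finsupp.single [a i, b i] 1
        + ∑ j, sig i j • Finsupp.single (a i :: u i j) 1
        + Finsupp.single (b i :: v i) 1)
      = (-(lam i)⁻¹) • ∑ j, sig i j • Finsupp.single (u i j ++ v i) (1 : K) := by
    intro i
    suffices h : QuivAux.Φ q K (Finsupp.linearCombination K (q.substList K g)
        (lam i • Finsupp.single [a i, b i] 1
          + ∑ j, sig i j • Finsupp.single (a i :: u i j) 1
          + Finsupp.single (b i :: v i) 1))
        = QuivAux.Φ q K ((-(lam i)⁻¹) • ∑ j, sig i j •
            Finsupp.single (u i j ++ v i) (1 : K)) from MonoidAlgebra.ofCoeff_injective h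
    simp only [map_add, map_smul, map_sum, map_neg, Finsupp.linearCombination_single,
      one_smul, QuivAux.phi_substList_cons, QuivAux.phi_substList_nil, hau, hav,
      hga, hgb, QuivAux.phi_single]
    rw [QuivAux.ring_calc_g (hlam i)]
    simp only [MonoidAlgebra.single_mul_single, one_mul, QuivAux.ofList_mul, neg_smul,
      smul_neg]
  have keyf : ∀ i, Finsupp.linearCombination K (q.substList K f)
      (lam i • Finsupp.single [a i, b i] 1
        + ∑ j, sig i j • Finsupp.single (a i :: u i j) 1
        + Finsupp.single (b i :: v i) 1)
      = lam i • Finsupp.single [a i, b i] 1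
        + (-(lam i)⁻¹) • ∑ j, sig i j • Finsupp.single (u i j ++ v i) (1 : K)
        + (Finsupp.single (b i :: v i) 1 - Finsupp.single (v i ++ [b i]) 1) := by
    intro i
    suffices h : QuivAux.Φ q K (Finsupp.linearCombination K (q.substList K f)
        (lam i • Finsupp.single [a i, b i] 1
          + ∑ j, sig i j • Finsupp.single (a i :: u i j) 1
          + Finsupp.single (b i :: v i) 1))
        = QuivAux.Φ q K (lam i • Finsupp.single [a i, b i] 1
          + (-(lam i)⁻¹) • ∑ j, sig i j • Finsupp.single (u i j ++ v i) (1 : K)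
          + (Finsupp.single (b i :: v i) 1 - Finsupp.single (v i ++ [b i]) 1)) from MonoidAlgebra.ofCoeff_injective h
    simp only [map_add, map_smul, map_sum, map_sub, map_neg,
      Finsupp.linearCombination_single, one_smul, QuivAux.phi_substList_cons,
      QuivAux.phi_substList_nil, hau', hav', hfa, hfb, QuivAux.phi_single]
    rw [QuivAux.ring_calc_f (hlam i)
      (AB := MonoidAlgebra.single (FreeMonoid.ofList [a i, b i]) 1)]
    · simp only [MonoidAlgebra.single_mul_single, one_mul, QuivAux.ofList_mul, neg_smul,
        smul_neg, List.cons_append, List.nil_append]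
    · rw [MonoidAlgebra.single_mul_single, one_mul]
      rfl
  have hrot : ∀ i : Fin N, (b i :: v i).rotate 1 = v i ++ [b i] := fun i => by
    simp [List.rotate_cons_succ]
  constructor
  · show _ ∈ _
    rw [QuivAux.subst_apply, map_add, map_sum, Finset.sum_congr rfl (fun i _ => keyg i),
      hWg, sub_self]
    exact Submodule.zero_mem _
  · show _ ∈ _
    have hD : q.subst K f
        (∑ i, (lam i • Finsupp.single [a i, b i] 1
          + ∑ j, sig i j • Finsupp.single (a i :: u i j) 1
          + Finsupp.single (b i :: v i) 1) + W)
        - ∑ i, lam i • Finsupp.single [a i, b i] 1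
        - ((∑ i, (-(lam i)⁻¹) • ∑ j, sig i j •
              Finsupp.single (u i j ++ v i) (1 : K)) + W)
        = ∑ i, (Finsupp.single (b i :: v i) 1
            - Finsupp.single ((b i :: v i).rotate 1) 1) := by
      simp only [hrot]
      rw [QuivAux.subst_apply, map_add, map_sum, Finset.sum_congr rfl (fun i _ => keyf i),
        hWf, Finset.sum_add_distrib, Finset.sum_add_distrib]
      abel
    rw [hD]
    exact Submodule.sum_mem _ fun i _ =>
      Submodule.subset_span ⟨b i :: v i, (hv i).2.1, rfl⟩
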